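/- Let m ∈ (0,1), a ∈ [−π, 0], and b > a. Suppose γ_w(·|m) restricted to [a,b) is injective, γ_w(a|m) = γ_w(b|m), and the unit tangents satisfy γ_w′(a|m)/|γ_w′(a|m)| = −γ_w′(b|m)/|γ_w′(b|m)|. Then m = m_T, a = a_T := −π + α(m_T), and b = b_T := π − α(m_T). In other words, up to scaling, reparametrization and isometries, the teardrop elastica is the only wavelike embedded cuspidal elastica. -/

import Mathlib

open Real MeasureTheory Set

noncomputable section

abbrev E2 := EuclideanSpace ℝ (Fin 2)

/-- The point of the Euclidean plane with coordinates `(a, b)`. -/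
def mkE2 (a b : ℝ) : E2 := WithLp.toLp 2 ![a, b]
/-- Incomplete elliptic integral of the first kind `F(x,m)`. -/
def Fell (x m : ℝ) : ℝ := ∫ θ in (0:ℝ)..x, 1 / Real.sqrt (1 - m * Real.sin θ ^ 2)

/-- Incomplete elliptic integral of the second kind `E(x,m)`. -/
def Eell (x m : ℝ) : ℝ := ∫ θ in (0:ℝ)..x, Real.sqrt (1 - m * Real.sin θ ^ 2)

/-- Complete elliptic integral of the first kind `K(m)`. -/
def Kc (m : ℝ) : ℝ := Fell (Real.pi / 2) m

/-- Complete elliptic integral of the second kind `E(m)`. -/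
def Ec (m : ℝ) : ℝ := Eell (Real.pi / 2) m

/-- `α(m) = arcsin √(1/(2m))`. -/
def alph (m : ℝ) : ℝ := Real.arcsin (Real.sqrt (1 / (2 * m)))

/-- `G(x,m) = ∫₀ˣ (1 − 2m sin²θ)(1 − m sin²θ)^{−1/2} dθ = 2E(x,m) − F(x,m)`. -/
def Gw (x m : ℝ) : ℝ :=
  ∫ θ in (0:ℝ)..x, (1 - 2 * m * Real.sin θ ^ 2) / Real.sqrt (1 - m * Real.sin θ ^ 2)

/-- `f(m) = ∫₀^{π−α(m)} (1 − 2m sin²θ)(1 − m sin²θ)^{−1/2} dθ`; its unique zero is `m_T`. -/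
def fT (m : ℝ) : ℝ := Gw (Real.pi - alph m) m
/-- The wavelike parametrization `γ_w(x|m) = (G(x,m), −2√m cos x)`. -/
def gammaW (m : ℝ) : ℝ → E2 := fun x => mkE2 (Gw x m) (-2 * Real.sqrt m * Real.cos x)

open intervalIntegral

lemma mkE2_inj {a b c d : ℝ} (h : mkE2 a b = mkE2 c d) : a = c ∧ b = d := by
  constructor
  · exact congrFun (congrArg WithLp.ofLp h) 0
  · exact congrFun (congrArg WithLp.ofLp h) 1

lemma smul_mkE2 (r a b : ℝ) : r • mkE2 a b = mkE2 (r*a) (r*b) := by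
  ext i
  fin_cases i <;> simp [mkE2] <;> rfl

lemma neg_mkE2 (a b : ℝ) : -mkE2 a b = mkE2 (-a) (-b) := by
  ext i
  fin_cases i <;> rfl

lemma norm_mkE2 (a b : ℝ) : ‖mkE2 a b‖ = Real.sqrt (a^2 + b^2) := by
  rw [EuclideanSpace.norm_eq]
  simp [mkE2, Fin.sum_univ_two, sq_abs]

variable {m : ℝ}

lemma q_pos (hm0 : 0 ≤ m) (hm1 : m < 1) (θ : ℝ) : 0 < 1 - m * Real.sin θ ^ 2 := by
  nlinarith [sin_sq_le_one θ, sq_nonneg (Real.sin θ)]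

lemma sqrt_q_pos (hm0 : 0 ≤ m) (hm1 : m < 1) (θ : ℝ) :
    0 < Real.sqrt (1 - m * Real.sin θ ^ 2) := Real.sqrt_pos.2 (q_pos hm0 hm1 θ)

lemma cont_g (hm0 : 0 ≤ m) (hm1 : m < 1) :
    Continuous (fun θ => (1 - 2 * m * Real.sin θ ^ 2) / Real.sqrt (1 - m * Real.sin θ ^ 2)) := by
  apply Continuous.div
  · continuity
  · continuity
  · intro θ; exact (sqrt_q_pos hm0 hm1 θ).ne'

lemma intable_g (hm0 : 0 ≤ m) (hm1 : m < 1) (a b : ℝ) :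
    IntervalIntegrable (fun θ => (1 - 2 * m * Real.sin θ ^ 2) / Real.sqrt (1 - m * Real.sin θ ^ 2))
      volume a b := (cont_g hm0 hm1).intervalIntegrable a b

lemma gw_hasDeriv (hm0 : 0 ≤ m) (hm1 : m < 1) (x : ℝ) :
    HasDerivAt (fun y => Gw y m)
      ((1 - 2 * m * Real.sin x ^ 2) / Real.sqrt (1 - m * Real.sin x ^ 2)) x :=
  integral_hasDerivAt_right (intable_g hm0 hm1 0 x)
    (cont_g hm0 hm1).aestronglyMeasurable.stronglyMeasurableAtFilter
    (cont_g hm0 hm1).continuousAt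

lemma gw_cont (hm0 : 0 ≤ m) (hm1 : m < 1) : Continuous (fun y => Gw y m) := by
  have : ∀ x, HasDerivAt (fun y => Gw y m)
      ((1 - 2 * m * Real.sin x ^ 2) / Real.sqrt (1 - m * Real.sin x ^ 2)) x :=
    gw_hasDeriv hm0 hm1
  exact continuous_iff_continuousAt.2 fun x => (this x).continuousAt

lemma mkE2_eq_smul (a b : ℝ) :
    mkE2 a b = a • (EuclideanSpace.single 0 (1:ℝ) : E2) + b • (EuclideanSpace.single 1 (1:ℝ) : E2) := by
  ext i
  fin_cases i <;> simp [mkE2, EuclideanSpace.single_apply] <;> rfl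

lemma gamma_hasDeriv (hm0 : 0 ≤ m) (hm1 : m < 1) (x : ℝ) :
    HasDerivAt (gammaW m)
      (mkE2 ((1 - 2 * m * Real.sin x ^ 2) / Real.sqrt (1 - m * Real.sin x ^ 2))
        (2 * Real.sqrt m * Real.sin x)) x := by
  have h1 : HasDerivAt (fun y => Gw y m)
      ((1 - 2 * m * Real.sin x ^ 2) / Real.sqrt (1 - m * Real.sin x ^ 2)) x :=
    gw_hasDeriv hm0 hm1 x
  have h2 : HasDerivAt (fun y => -2 * Real.sqrt m * Real.cos y)
      (2 * Real.sqrt m * Real.sin x) x := by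
    have := ((Real.hasDerivAt_cos x).const_mul (-2 * Real.sqrt m))
    rw [show (2 * Real.sqrt m * Real.sin x) = -2 * Real.sqrt m * -Real.sin x by ring]; exact this
  have : HasDerivAt (fun y => (Gw y m) • (EuclideanSpace.single 0 (1:ℝ) : E2)
        + (-2 * Real.sqrt m * Real.cos y) • (EuclideanSpace.single 1 (1:ℝ) : E2))
      (((1 - 2 * m * Real.sin x ^ 2) / Real.sqrt (1 - m * Real.sin x ^ 2)) •
          (EuclideanSpace.single 0 (1:ℝ) : E2)
        + (2 * Real.sqrt m * Real.sin x) • (EuclideanSpace.single 1 (1:ℝ) : E2)) x :=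
    (h1.smul_const _).add (h2.smul_const _)
  convert this using 1
  · funext y; rw [gammaW, mkE2_eq_smul]
  · rw [mkE2_eq_smul]

lemma norm_deriv_gamma (hm0 : 0 ≤ m) (hm1 : m < 1) (x : ℝ) :
    ‖deriv (gammaW m) x‖ = (Real.sqrt (1 - m * Real.sin x ^ 2))⁻¹ := by
  rw [(gamma_hasDeriv hm0 hm1 x).deriv, norm_mkE2]
  have hq := q_pos hm0 hm1 x
  have hs := sqrt_q_pos hm0 hm1 x
  have key : ((1 - 2 * m * Real.sin x ^ 2) / Real.sqrt (1 - m * Real.sin x ^ 2)) ^ 2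
      + (2 * Real.sqrt m * Real.sin x) ^ 2 = (1 - m * Real.sin x ^ 2)⁻¹ := by
    have hsq : (2 * Real.sqrt m * Real.sin x) ^ 2 = 4 * (m * Real.sin x ^ 2) := by
      rw [mul_pow, mul_pow, Real.sq_sqrt hm0]; ring
    rw [div_pow, Real.sq_sqrt hq.le, hsq]
    field_simp
    ring
  rw [key, ← Real.sqrt_inv]

lemma unit_tangent (hm0 : 0 ≤ m) (hm1 : m < 1) (x : ℝ) :
    (‖deriv (gammaW m) x‖)⁻¹ • deriv (gammaW m) x =
      mkE2 (1 - 2 * m * Real.sin x ^ 2)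
        (2 * Real.sqrt m * Real.sin x * Real.sqrt (1 - m * Real.sin x ^ 2)) := by
  have hs := sqrt_q_pos hm0 hm1 x
  have e1 : Real.sqrt (1 - m * Real.sin x ^ 2) *
      ((1 - 2 * m * Real.sin x ^ 2) / Real.sqrt (1 - m * Real.sin x ^ 2))
      = 1 - 2 * m * Real.sin x ^ 2 := by field_simp
  rw [norm_deriv_gamma hm0 hm1 x, (gamma_hasDeriv hm0 hm1 x).deriv, inv_inv, smul_mkE2,
    mul_comm (Real.sqrt (1 - m * Real.sin x ^ 2)) (2 * Real.sqrt m * Real.sin x), e1]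

lemma gw_neg (hm0 : 0 ≤ m) (hm1 : m < 1) (x : ℝ) : Gw (-x) m = -Gw x m := by
  unfold Gw
  have : ∀ θ : ℝ, (1 - 2 * m * Real.sin (-θ) ^ 2) / Real.sqrt (1 - m * Real.sin (-θ) ^ 2)
      = (1 - 2 * m * Real.sin θ ^ 2) / Real.sqrt (1 - m * Real.sin θ ^ 2) := by
    intro θ; rw [Real.sin_neg]; ring_nf
  calc (∫ θ in (0:ℝ)..(-x), (1 - 2 * m * Real.sin θ ^ 2) / Real.sqrt (1 - m * Real.sin θ ^ 2))
      = ∫ θ in (0:ℝ)..(-x), (1 - 2 * m * Real.sin (-(-θ)) ^ 2) / Real.sqrt (1 - m * Real.sin (-(-θ)) ^ 2) := by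
        simp only [neg_neg]
    _ = ∫ θ in (x:ℝ)..(0:ℝ), (1 - 2 * m * Real.sin (-θ) ^ 2) / Real.sqrt (1 - m * Real.sin (-θ) ^ 2) := by
        rw [intervalIntegral.integral_comp_neg
          (f := fun θ => (1 - 2 * m * Real.sin (-θ) ^ 2) / Real.sqrt (1 - m * Real.sin (-θ) ^ 2))]
        norm_num
    _ = ∫ θ in (x:ℝ)..(0:ℝ), (1 - 2 * m * Real.sin θ ^ 2) / Real.sqrt (1 - m * Real.sin θ ^ 2) := by
        simp only [this]
    _ = -∫ θ in (0:ℝ)..x, (1 - 2 * m * Real.sin θ ^ 2) / Real.sqrt (1 - m * Real.sin θ ^ 2) :=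
        intervalIntegral.integral_symm 0 x

lemma gw_add_pi (hm0 : 0 ≤ m) (hm1 : m < 1) (x : ℝ) : Gw (x + π) m = Gw x m + Gw π m := by
  unfold Gw
  have hper : ∀ θ : ℝ, (1 - 2 * m * Real.sin (θ + π) ^ 2) / Real.sqrt (1 - m * Real.sin (θ + π) ^ 2)
      = (1 - 2 * m * Real.sin θ ^ 2) / Real.sqrt (1 - m * Real.sin θ ^ 2) := by
    intro θ; rw [Real.sin_add_pi]; ring_nf
  have h2 : (∫ θ in (π:ℝ)..(x+π), (1 - 2 * m * Real.sin θ ^ 2) / Real.sqrt (1 - m * Real.sin θ ^ 2))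
      = ∫ θ in (0:ℝ)..x, (1 - 2 * m * Real.sin θ ^ 2) / Real.sqrt (1 - m * Real.sin θ ^ 2) := by
    have h := intervalIntegral.integral_comp_add_right (a := (0:ℝ)) (b := x)
      (f := fun θ => (1 - 2 * m * Real.sin θ ^ 2) / Real.sqrt (1 - m * Real.sin θ ^ 2)) π
    rw [zero_add] at h
    rw [← h]
    simp only [hper]
  rw [← intervalIntegral.integral_add_adjacent_intervals (intable_g hm0 hm1 0 π)
    (intable_g hm0 hm1 π (x+π)), h2]
  ring

lemma gw_add_int_pi (hm0 : 0 ≤ m) (hm1 : m < 1) (n : ℤ) (x : ℝ) :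
    Gw (x + n * π) m = Gw x m + n * Gw π m := by
  induction n using Int.induction_on with
  | zero => simp
  | succ k ih =>
      push_cast at ih ⊢
      rw [show x + ((k:ℝ) + 1) * π = (x + (k:ℝ) * π) + π by ring, gw_add_pi hm0 hm1, ih]; ring
  | pred k ih =>
      push_cast at ih ⊢
      have h2 := gw_add_pi hm0 hm1 (x + (-(k:ℝ) - 1) * π)
      rw [show x + (-(k:ℝ) - 1) * π + π = x + (-(k:ℝ)) * π by ring, ih] at h2
      linarith

lemma gw_pi_sub (hm0 : 0 ≤ m) (hm1 : m < 1) (x : ℝ) : Gw (π - x) m = Gw π m - Gw x m := by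
  have := gw_add_pi hm0 hm1 (-x)
  rw [gw_neg hm0 hm1] at this
  rw [show π - x = -x + π by ring, this]; ring

lemma alph_facts (hm0 : 1/2 ≤ m) (hm1 : m < 1) :
    Real.sin (alph m) = Real.sqrt (1 / (2 * m)) ∧ 0 < alph m ∧ alph m ≤ π / 2 := by
  have hmpos : 0 < m := by linarith
  have h1 : 1 / (2 * m) ≤ 1 := by rw [div_le_one (by linarith)]; linarith
  have h0 : 0 < 1 / (2 * m) := by positivity
  refine ⟨Real.sin_arcsin (by linarith [Real.sqrt_nonneg (1/(2*m))])
    (Real.sqrt_le_one.2 h1), ?_, ?_⟩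
  · exact Real.arcsin_pos.2 (Real.sqrt_pos.2 h0)
  · exact Real.arcsin_le_pi_div_two _

lemma sin_sq_alph (hm0 : 1/2 ≤ m) (hm1 : m < 1) : Real.sin (alph m) ^ 2 = 1 / (2 * m) := by
  rw [(alph_facts hm0 hm1).1, Real.sq_sqrt (by positivity)]

lemma alph_lt_pi_div_two (hm0 : 1/2 < m) (hm1 : m < 1) : alph m < π / 2 := by
  apply Real.arcsin_lt_pi_div_two.2
  have h : Real.sqrt (1/(2*m)) < Real.sqrt 1 :=
    Real.sqrt_lt_sqrt (by positivity) (by rw [div_lt_one (by linarith)]; linarith)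
  simpa using h

lemma gw_alph_pos (hm0 : 1/2 ≤ m) (hm1 : m < 1) : 0 < Gw (alph m) m := by
  obtain ⟨hsin, hpos, hle⟩ := alph_facts hm0 hm1
  apply intervalIntegral.intervalIntegral_pos_of_pos_on (intable_g (by linarith) hm1 _ _) _ hpos
  intro θ hθ
  have h1 : Real.sin θ < Real.sin (alph m) := by
    apply Real.sin_lt_sin_of_lt_of_le_pi_div_two (by linarith [hθ.1, Real.pi_pos]) hle hθ.2
  have h2 : 0 < Real.sin θ := Real.sin_pos_of_pos_of_lt_pi hθ.1 (by linarith [Real.pi_pos, hθ.2])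
  have h3 : Real.sin θ ^ 2 < 1 / (2 * m) := by
    rw [← sin_sq_alph hm0 hm1]
    exact pow_lt_pow_left₀ h1 h2.le two_ne_zero
  have hnum : 0 < 1 - 2 * m * Real.sin θ ^ 2 := by
    have : 2 * m * Real.sin θ ^ 2 < 2 * m * (1 / (2*m)) := by
      apply mul_lt_mul_of_pos_left h3 (by linarith)
    rw [mul_one_div, div_self (ne_of_gt (by positivity : (0:ℝ) < 2*m))] at this
    linarith
  exact div_pos hnum (sqrt_q_pos (by linarith) hm1 θ)

lemma hRepr {u : ℝ} (hu : u < 1) :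
    (1 - 2*u)/Real.sqrt (1-u) = 2*Real.sqrt (1-u) - 1/Real.sqrt (1-u) := by
  have h : 0 < Real.sqrt (1-u) := Real.sqrt_pos.2 (by linarith)
  have h2 : Real.sqrt (1-u) * Real.sqrt (1-u) = 1-u := Real.mul_self_sqrt (by linarith)
  field_simp
  nlinarith [h2]

lemma mono_u {u v : ℝ} (hu : 0 ≤ u) (huv : u < v) (hv : v < 1) :
    (1 - 2*v)/Real.sqrt (1-v) < (1 - 2*u)/Real.sqrt (1-u) := by
  rw [hRepr hv, hRepr (lt_of_le_of_lt (le_of_lt huv) hv |>.trans_le (le_refl 1) |> fun _ => (by linarith : u < 1))]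
  have p1 : 0 < Real.sqrt (1-v) := Real.sqrt_pos.2 (by linarith)
  have s1 : Real.sqrt (1-v) < Real.sqrt (1-u) := Real.sqrt_lt_sqrt (by linarith) (by linarith)
  have h2 : 1/Real.sqrt (1-u) ≤ 1/Real.sqrt (1-v) := by
    apply one_div_le_one_div_of_le p1 s1.le
  linarith

lemma mono_u_le {u v : ℝ} (hu : 0 ≤ u) (huv : u ≤ v) (hv : v < 1) :
    (1 - 2*v)/Real.sqrt (1-v) ≤ (1 - 2*u)/Real.sqrt (1-u) := by
  rcases eq_or_lt_of_le huv with h | h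
  · rw [h]
  · exact (mono_u hu h hv).le

lemma fT_strictAnti : StrictAntiOn fT (Ioo (1/2:ℝ) 1) := by
  intro m1 h1 m2 h2 h12
  obtain ⟨hm1l, hm1u⟩ := h1
  obtain ⟨hm2l, hm2u⟩ := h2
  have hm10 : (0:ℝ) ≤ m1 := by linarith
  have hm20 : (0:ℝ) ≤ m2 := by linarith
  have hα1lt : alph m1 < π/2 := alph_lt_pi_div_two hm1l hm1u
  have hα2lt : alph m2 < π/2 := alph_lt_pi_div_two hm2l hm2u
  have hα1pos : 0 < alph m1 := (alph_facts hm1l.le hm1u).2.1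
  have hα2pos : 0 < alph m2 := (alph_facts hm2l.le hm2u).2.1
  have hαlt : alph m2 < alph m1 := by
    have hs : Real.sqrt (1/(2*m2)) < Real.sqrt (1/(2*m1)) := by
      apply Real.sqrt_lt_sqrt (by positivity)
      apply div_lt_div_of_pos_left one_pos (by linarith) (by linarith)
    have h1m : Real.sqrt (1/(2*m1)) ≤ 1 := Real.sqrt_le_one.2 (by
      rw [div_le_one (by linarith)]; linarith)
    exact Real.strictMonoOn_arcsin ⟨by linarith [Real.sqrt_nonneg (1/(2*m2))], hs.le.trans h1m⟩
      ⟨by linarith [Real.sqrt_nonneg (1/(2*m1))], h1m⟩ hs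
  set g1 : ℝ → ℝ := fun θ => (1 - 2 * m1 * Real.sin θ ^ 2) / Real.sqrt (1 - m1 * Real.sin θ ^ 2) with hg1
  set g2 : ℝ → ℝ := fun θ => (1 - 2 * m2 * Real.sin θ ^ 2) / Real.sqrt (1 - m2 * Real.sin θ ^ 2) with hg2
  have hptle : ∀ θ : ℝ, g2 θ ≤ g1 θ := by
    intro θ
    have h1 : m1 * Real.sin θ ^ 2 ≤ m2 * Real.sin θ ^ 2 := by nlinarith [sq_nonneg (Real.sin θ)]
    have h2 : m2 * Real.sin θ ^ 2 < 1 := by linarith [q_pos hm20 hm2u θ]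
    have := mono_u_le (u := m1 * Real.sin θ ^ 2) (v := m2 * Real.sin θ ^ 2)
      (by positivity) h1 h2
    simp only [hg1, hg2]
    convert this using 3 <;> ring
  have key1 : Gw (π - alph m1) m2 < Gw (π - alph m1) m1 := by
    apply intervalIntegral.integral_lt_integral_of_continuousOn_of_le_of_exists_lt
      (by linarith [Real.pi_pos]) (cont_g hm20 hm2u).continuousOn (cont_g hm10 hm1u).continuousOn
      (fun θ _ => hptle θ)
    refine ⟨π/2, ⟨by linarith [Real.pi_pos], by linarith⟩, ?_⟩
    have h2 : m2 * Real.sin (π/2) ^ 2 < 1 := by linarith [q_pos hm20 hm2u (π/2)]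
    have h1 : m1 * Real.sin (π/2) ^ 2 < m2 * Real.sin (π/2) ^ 2 := by
      rw [Real.sin_pi_div_two]; nlinarith
    have := mono_u (u := m1 * Real.sin (π/2) ^ 2) (v := m2 * Real.sin (π/2) ^ 2)
      (by positivity) h1 h2
    convert this using 3 <;> ring
  have key2 : (∫ θ in (π - alph m1)..(π - alph m2), g2 θ) ≤ 0 := by
    have hab : π - alph m1 ≤ π - alph m2 := by linarith
    have hpt : ∀ θ ∈ Icc (π - alph m1) (π - alph m2), g2 θ ≤ 0 := by
      intro θ hθ
      have hmem1 : alph m2 ≤ π - θ := by linarith [hθ.2]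
      have hmem2 : π - θ ≤ alph m1 := by linarith [hθ.1]
      have hsin : Real.sin (alph m2) ≤ Real.sin θ := by
        rw [← Real.sin_pi_sub θ]
        exact Real.strictMonoOn_sin.monotoneOn ⟨by linarith, hα2lt.le⟩
          ⟨by linarith, by linarith⟩ hmem1
      have hsq : 1/(2*m2) ≤ Real.sin θ ^ 2 := by
        rw [← sin_sq_alph hm2l.le hm2u]
        apply pow_le_pow_left₀
          (Real.sin_nonneg_of_nonneg_of_le_pi hα2pos.le (by linarith [Real.pi_pos])) hsin
      have hnum : 1 - 2 * m2 * Real.sin θ ^ 2 ≤ 0 := by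
        have h' := (div_le_iff₀ (by linarith : (0:ℝ) < 2*m2)).1 hsq
        nlinarith
      exact div_nonpos_of_nonpos_of_nonneg hnum (Real.sqrt_nonneg _)
    have h0 : 0 ≤ ∫ θ in (π - alph m1)..(π - alph m2), -(g2 θ) :=
      intervalIntegral.integral_nonneg hab (fun u hu => neg_nonneg.2 (hpt u hu))
    rw [intervalIntegral.integral_neg] at h0
    linarith
  have hsplit : fT m2 = Gw (π - alph m1) m2 + ∫ θ in (π - alph m1)..(π - alph m2), g2 θ := by
    rw [fT, Gw, Gw, ← intervalIntegral.integral_add_adjacent_intervals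
      (intable_g hm20 hm2u 0 (π - alph m1)) (intable_g hm20 hm2u (π - alph m1) (π - alph m2))]
  have : fT m1 = Gw (π - alph m1) m1 := rfl
  rw [hsplit, this]
  linarith


set_option maxHeartbeats 2000000 in
/-- Proposition 2.17, uniqueness of wavelike ECEs: if the wavelike
parametrization `γ_w(·|m)` restricted to `[a, b)` (with `a ∈ [−π, 0]`) is injective, closes up
at its endpoints and has opposite unit tangents there, then `m = m_T`, `a = −π + α(m_T)` and
`b = π − α(m_T)`; i.e. the curve is the teardrop elastica. -/
theorem stmt10 (mT : ℝ) (hmT : mT ∈ Set.Ioo (1/2 : ℝ) 1) (hmTzero : fT mT = 0)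
    (m a b : ℝ) (hm : m ∈ Set.Ioo (0:ℝ) 1) (ha : a ∈ Set.Icc (-Real.pi) 0) (hab : a < b)
    (hinj : Set.InjOn (gammaW m) (Set.Ico a b))
    (hclose : gammaW m a = gammaW m b)
    (htang : (‖deriv (gammaW m) a‖)⁻¹ • deriv (gammaW m) a =
      -((‖deriv (gammaW m) b‖)⁻¹ • deriv (gammaW m) b)) :
    m = mT ∧ a = -Real.pi + alph mT ∧ b = Real.pi - alph mT := by
  obtain ⟨hm0, hm1⟩ := hm
  have hm0' : (0:ℝ) ≤ m := hm0.le
  have hpi := Real.pi_pos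
  -- tangent components
  rw [unit_tangent hm0' hm1 a, unit_tangent hm0' hm1 b, neg_mkE2] at htang
  obtain ⟨hT1, hT2⟩ := mkE2_inj htang
  -- closure components
  have hclose' : mkE2 (Gw a m) (-2 * Real.sqrt m * Real.cos a)
      = mkE2 (Gw b m) (-2 * Real.sqrt m * Real.cos b) := hclose
  obtain ⟨hGab, hcosab⟩ := mkE2_inj hclose'
  have hcos : Real.cos a = Real.cos b := by
    have h2 : (-2 : ℝ) * Real.sqrt m ≠ 0 :=
      mul_ne_zero (by norm_num) (ne_of_gt (Real.sqrt_pos.2 hm0))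
    exact mul_left_cancel₀ h2 hcosab
  obtain ⟨k, hk | hk⟩ := Real.cos_eq_cos_iff.1 hcos
  · -- b = 2kπ + a : impossible
    exfalso
    have hsb : Real.sin b = Real.sin a := by
      rw [hk, show 2*(k:ℝ)*π + a = a + (k:ℝ)*(2*π) by ring]
      exact Real.sin_add_int_mul_two_pi a k
    rw [hsb] at hT1 hT2
    have h1 : 1 - 2*m*Real.sin a^2 = 0 := by linarith
    have h2 : Real.sin a = 0 := by
      have hprod : 2 * Real.sqrt m * Real.sin a * Real.sqrt (1 - m * Real.sin a ^ 2) = 0 := by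
        linarith
      by_contra hne
      exact (mul_ne_zero (mul_ne_zero (mul_ne_zero two_ne_zero
        (ne_of_gt (Real.sqrt_pos.2 hm0))) hne) (sqrt_q_pos hm0' hm1 a).ne') hprod
    rw [h2] at h1; norm_num at h1
  · -- b = 2kπ - a
    have hsb : Real.sin b = - Real.sin a := by
      rw [hk, show 2*(k:ℝ)*π - a = -a + (k:ℝ)*(2*π) by ring,
        Real.sin_add_int_mul_two_pi, Real.sin_neg]
    have hsb2 : Real.sin b ^ 2 = Real.sin a ^ 2 := by rw [hsb]; ring
    rw [hsb2] at hT1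
    have hms : m * Real.sin a ^ 2 = 1/2 := by linarith
    have hm_half : (1:ℝ)/2 ≤ m := by nlinarith [Real.sin_sq_le_one a]
    have hsin_ne : Real.sin a ≠ 0 := by
      intro h; rw [h] at hms; norm_num at hms
    have ha_lt : -π < a ∧ a < 0 := by
      constructor
      · rcases eq_or_lt_of_le ha.1 with h | h
        · exfalso; apply hsin_ne; rw [← h, Real.sin_neg, Real.sin_pi, neg_zero]
        · exact h
      · rcases eq_or_lt_of_le ha.2 with h | h
        · exfalso; apply hsin_ne; rw [h, Real.sin_zero]
        · exact h
    have hsin_neg : Real.sin a < 0 := by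
      have h := Real.sin_pos_of_pos_of_lt_pi (x := -a) (by linarith [ha_lt.2]) (by linarith [ha_lt.1])
      rw [Real.sin_neg] at h; linarith
    obtain ⟨hsinα, hαpos, hαle⟩ := alph_facts hm_half hm1
    have hsinsq : Real.sin a ^ 2 = 1/(2*m) := by
      field_simp at hms ⊢; linarith
    have hsin_a : Real.sin a = - Real.sqrt (1/(2*m)) := by
      have h2 : Real.sqrt (1/(2*m)) = Real.sqrt (Real.sin a ^ 2) := by rw [hsinsq]
      rw [Real.sqrt_sq_eq_abs, abs_of_neg hsin_neg] at h2
      linarith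
    have ha_cases : a = -(alph m) ∨ a = -π + alph m := by
      rcases le_or_gt (-a) (π/2) with h | h
      · left
        have harc : Real.arcsin (Real.sin (-a)) = -a :=
          Real.arcsin_sin (by linarith) h
        rw [Real.sin_neg, hsin_a, neg_neg] at harc
        rw [alph] at *
        linarith [harc]
      · right
        have harc : Real.arcsin (Real.sin (a + π)) = a + π :=
          Real.arcsin_sin (by linarith [ha_lt.1]) (by linarith)
        rw [Real.sin_add_pi, hsin_a, neg_neg] at harc
        rw [alph] at *
        linarith [harc]
    have hk0 : 0 ≤ k := by
      by_contra hneg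
      push_neg at hneg
      have hkz : k ≤ -1 := by omega
      have hkR : (k:ℝ) ≤ -1 := by exact_mod_cast hkz
      have : b ≤ -2*π - a := by rw [hk]; nlinarith
      linarith [ha.1]
    -- Gw relation
    have hGwb : Gw b m = - Gw a m + (2*(k:ℝ)) * Gw π m := by
      have h := gw_add_int_pi hm0' hm1 (2*k) (-a)
      rw [gw_neg hm0' hm1] at h
      rw [hk, show 2*(k:ℝ)*π - a = -a + ((2*k : ℤ):ℝ)*π by push_cast; ring, h]
      push_cast; ring
    have hGa : Gw a m = (k:ℝ) * Gw π m := by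
      rw [hGwb] at hGab; linarith
    have hA : 0 < Gw (alph m) m := gw_alph_pos hm_half hm1
    have hF : Gw (π - alph m) m = Gw π m - Gw (alph m) m := gw_pi_sub hm0' hm1 _
    rcases eq_or_lt_of_le hk0 with hk0' | hk1
    · -- k = 0 : the main case
      have hb : b = -a := by rw [hk, ← hk0']; push_cast; ring
      have hGa0 : Gw a m = 0 := by rw [hGa, ← hk0']; push_cast; ring
      rcases ha_cases with hac | hac
      · exfalso
        rw [hac, gw_neg hm0' hm1] at hGa0
        linarith
      · have hF0 : Gw (π - alph m) m = 0 := by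
          have : Gw a m = - Gw (π - alph m) m := by
            rw [show a = -(π - alph m) by rw [hac]; ring, gw_neg hm0' hm1]
          rw [this] at hGa0; linarith
        have hm_half' : (1:ℝ)/2 < m := by
          rcases eq_or_lt_of_le hm_half with h | h
          · exfalso
            have hα2 : alph m = π/2 := by
              rw [alph, ← h]; norm_num
            rw [hα2, show π - π/2 = π/2 by ring] at hF0
            rw [hα2] at hA
            linarith
          · exact h
        have hmmT : m = mT := by
          have hfTm : fT m = 0 := hF0
          exact fT_strictAnti.injOn ⟨hm_half', hm1⟩ hmT (by rw [hfTm, hmTzero])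
        refine ⟨hmmT, ?_, ?_⟩
        · rw [← hmmT]; exact hac
        · rw [← hmmT, hb, hac]; ring
    · -- k ≥ 1 : contradiction with injectivity
      exfalso
      have hkR : (1:ℝ) ≤ (k:ℝ) := by exact_mod_cast hk1
      have hF_neg : Gw (π - alph m) m < 0 := by
        by_contra hge
        push_neg at hge
        have hPpos : 0 < Gw π m := by linarith
        have hkP : Gw π m ≤ (k:ℝ) * Gw π m := le_mul_of_one_le_left hPpos.le hkR
        rcases ha_cases with hac | hac
        · have h1 : Gw a m = - Gw (alph m) m := by
            rw [hac]; exact gw_neg hm0' hm1 _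
          rw [h1] at hGa
          linarith
        · have h1 : Gw a m = - Gw (π - alph m) m := by
            rw [show a = -(π - alph m) by rw [hac]; ring]; exact gw_neg hm0' hm1 _
          rw [h1] at hGa
          linarith
      have hαlt : alph m < π/2 := by
        rcases eq_or_lt_of_le hαle with h | h
        · exfalso
          rw [h, show π - π/2 = π/2 by ring] at hF_neg
          rw [h] at hA
          linarith
        · exact h
      have hmemP : Gw π m ∈ Icc (Gw (π - alph m) m) (Gw (alph m) m) := by
        constructor <;> [linarith; linarith]
      obtain ⟨x, hxmem, hGx0⟩ := intermediate_value_Icc' (by linarith : alph m ≤ π - alph m)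
        (gw_cont hm0' hm1).continuousOn hmemP
      have hGx : Gw x m = Gw π m := hGx0
      have hx1 : alph m < x := by
        rcases eq_or_lt_of_le hxmem.1 with h | h
        · exfalso; rw [← h] at hGx; rw [hGx] at hF; linarith
        · exact h
      have hx2 : x < π - alph m := by
        rcases eq_or_lt_of_le hxmem.2 with h | h
        · exfalso; rw [h] at hGx; rw [hGx] at hF; linarith
        · exact h
      have ha_neg : a < 0 := ha_lt.2
      have hb_big : 2*π - a ≤ b := by
        have h2 : (1:ℝ)*π ≤ (k:ℝ)*π := mul_le_mul_of_nonneg_right hkR hpi.le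
        rw [hk]; linarith
      have hxa : x ∈ Ico a b := ⟨by linarith, by linarith⟩
      have hya : 2*π - x ∈ Ico a b := ⟨by linarith, by linarith⟩
      have heq : gammaW m x = gammaW m (2*π - x) := by
        have hGw2 : Gw (2*π - x) m = Gw x m := by
          have h := gw_add_int_pi hm0' hm1 2 (-x)
          rw [gw_neg hm0' hm1] at h
          rw [show 2*π - x = -x + ((2:ℤ):ℝ)*π by push_cast; ring, h, hGx]
          push_cast; ring
        have hcos2 : Real.cos (2*π - x) = Real.cos x := Real.cos_two_pi_sub x
        simp only [gammaW]
        rw [hGw2, hcos2]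
      have hxeq := hinj hxa hya heq
      have : x = π := by linarith
      linarith
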